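/- Let Λ_l(Φ) = Φ² + A·Φ + C be a quadratic in Φ with A = (1+p/2)(1−s−p/η) + (s+p/η)²/2 − η(1−s−p/η)² and C ≤ 0, and let Φ₀ = 1−ηs−p−(1−η) > 0, where η∈(0,1), s,p≥0, s+p/η≤1. Then Λ_l'(Φ₀) > 0; consequently on [0, Φ₀] the function Λ_l is either strictly increasing, or first strictly decreasing and then strictly increasing. -/

import Mathlib

theorem stmt4 (η s p A C : ℝ) (hη : η ∈ Set.Ioo (0:ℝ) 1) (hs : 0 ≤ s) (hp : 0 ≤ p)
    (hsp : s + p / η ≤ 1)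
    (hA : A = (1 + p / 2) * (1 - s - p / η) + (s + p / η)^2 / 2 - η * (1 - s - p / η)^2)
    (hC : C ≤ 0)
    (hΦ₀ : 0 < 1 - η * s - p - (1 - η)) :
    0 < deriv (fun Φ : ℝ => Φ^2 + A * Φ + C) (1 - η * s - p - (1 - η)) ∧
    (StrictMonoOn (fun Φ : ℝ => Φ^2 + A * Φ + C) (Set.Icc 0 (1 - η * s - p - (1 - η))) ∨
      ∃ m ∈ Set.Ioo (0:ℝ) (1 - η * s - p - (1 - η)),
        StrictAntiOn (fun Φ : ℝ => Φ^2 + A * Φ + C) (Set.Icc 0 m) ∧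
        StrictMonoOn (fun Φ : ℝ => Φ^2 + A * Φ + C) (Set.Icc m (1 - η * s - p - (1 - η)))) := by
  obtain ⟨hη0, hη1⟩ := hη
  set Φ₀ : ℝ := 1 - η * s - p - (1 - η) with hΦ0def
  have hηne : η ≠ 0 := ne_of_gt hη0
  -- key inequality: 2Φ₀ + A > 0
  have hkey : 0 < 2 * Φ₀ + A := by
    have ht : s + p / η ≤ 1 := hsp
    have hΦ0 : Φ₀ = η * (1 - (s + p / η)) := by
      field_simp [hΦ0def]; ring
    set t := s + p / η with htdef
    have ht0 : 0 ≤ t := by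
      have : 0 ≤ p / η := div_nonneg hp hη0.le
      positivity
    have ht1 : t < 1 := by
      by_contra h
      push_neg at h
      have : Φ₀ ≤ 0 := by
        rw [hΦ0]; nlinarith
      linarith
    have hA' : A = (1 + p / 2) * (1 - t) + t ^ 2 / 2 - η * (1 - t) ^ 2 := by
      rw [hA, htdef]; ring
    have aux : ∀ u : ℝ, 0 ≤ u → u < 1 →
        0 < 2 * (η * (1 - u)) + ((1 + p / 2) * (1 - u) + u ^ 2 / 2 - η * (1 - u) ^ 2) := by
      intro u h0 h1
      nlinarith [sq_nonneg u, mul_pos (mul_pos hη0 (by linarith : (0:ℝ) < 1 - u)) (by linarith : (0:ℝ) < 1 + u), mul_pos (by linarith : (0:ℝ) < 1 + p / 2) (by linarith : (0:ℝ) < 1 - u)]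
    rw [hΦ0, hA']
    exact aux t ht0 ht1
  have hderiv : ∀ x : ℝ, HasDerivAt (fun Φ : ℝ => Φ^2 + A * Φ + C) (2 * x + A) x := by
    intro x
    have h1 : HasDerivAt (fun Φ : ℝ => Φ^2) (2 * x) x := by
      simpa using hasDerivAt_pow 2 x
    have h2 : HasDerivAt (fun Φ : ℝ => A * Φ) A x := by
      simpa using (hasDerivAt_id x).const_mul A
    simpa using (h1.add h2).add_const C
  constructor
  · rw [(hderiv Φ₀).deriv]; linarith
  · -- monotonicity structure
    have hmono : ∀ a b : ℝ, 0 ≤ 2 * a + A →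
        StrictMonoOn (fun Φ : ℝ => Φ^2 + A * Φ + C) (Set.Icc a b) := by
      intro a b hab
      intro x hx y hy hxy
      simp only
      have : y^2 + A*y - (x^2 + A*x) = (y - x) * (x + y + A) := by ring
      have hpos : 0 < (y - x) * (x + y + A) := by
        apply mul_pos (by linarith)
        have := hx.1; have := hy.2
        linarith
      nlinarith
    rcases le_or_gt 0 A with hA0 | hA0
    · left
      exact hmono 0 Φ₀ (by linarith)
    · right
      refine ⟨-A/2, ⟨by linarith, by linarith⟩, ?_, ?_⟩
      · intro x hx y hy hxy
        simp only
        have hpos : 0 < (y - x) * (-(x + y + A)) := by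
          apply mul_pos (by linarith)
          have := hx.1; have := hy.2
          linarith
        nlinarith
      · exact hmono (-A/2) Φ₀ (by linarith)
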